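/- Let V be a finite type with at least 2 elements, P : Matrix V V ℝ a stochastic matrix, and π : V → ℝ a probability vector with π x > 0 for all x that is reversible for P (π x * P x y = π y * P y x for all x, y). For y ∈ V, t ≥ 0 a real number, and a probability vector ν on V, define the continuous-time survival probability S_c ν y t := ∑_{x ≠ y} ∑_{ξ ≠ y} ν x * (Matrix.exp (t • (P̂ − 1))) x ξ, where P̂ is the principal submatrix of P deleting the row and column of y and 1 is the identity matrix on {x // x ≠ y}. Then for all real t, s ≥ 0, S_c π y t * S_c π y s ≤ (1 − π y) * S_c π y (t + s), and consequently for every k ≥ 2 and all t₁, …, t_k ≥ 0, ∏_{i=1}^k S_c π y t_i ≤ (1 − π y)^{k−1} * S_c π y (t₁ + ⋯ + t_k). -/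

import Mathlib

open Finset Matrix in

/-- Weighted Chebyshev sum inequality for exponentials. -/
lemma survival_cheb {n : Type*} [Fintype n] (c lam : n → ℝ) (hc : ∀ j, 0 ≤ c j)
    (t s : ℝ) (ht : 0 ≤ t) (hs : 0 ≤ s) :
    (∑ j, c j * Real.exp (t * lam j)) * (∑ j, c j * Real.exp (s * lam j)) ≤
      (∑ j, c j) * (∑ j, c j * Real.exp ((t + s) * lam j)) := by
  set a : n → ℝ := fun j => Real.exp (t * lam j) with ha
  set b : n → ℝ := fun j => Real.exp (s * lam j) with hb
  have hab : ∀ j, Real.exp ((t + s) * lam j) = a j * b j := fun j => by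
    rw [ha, hb]; simp only [add_mul, Real.exp_add]
  have key : 0 ≤ ∑ i, ∑ j, c i * c j * ((a i - a j) * (b i - b j)) := by
    refine Finset.sum_nonneg fun i _ => Finset.sum_nonneg fun j _ => ?_
    refine mul_nonneg (mul_nonneg (hc i) (hc j)) ?_
    rcases le_total (lam i) (lam j) with h | h
    · have h1 : a i ≤ a j := Real.exp_le_exp.2 (mul_le_mul_of_nonneg_left h ht)
      have h2 : b i ≤ b j := Real.exp_le_exp.2 (mul_le_mul_of_nonneg_left h hs)
      nlinarith
    · have h1 : a j ≤ a i := Real.exp_le_exp.2 (mul_le_mul_of_nonneg_left h ht)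
      have h2 : b j ≤ b i := Real.exp_le_exp.2 (mul_le_mul_of_nonneg_left h hs)
      exact mul_nonneg (by linarith) (by linarith)
  have expand : ∑ i, ∑ j, c i * c j * ((a i - a j) * (b i - b j)) =
      (∑ i, c i * (a i * b i)) * (∑ j, c j) - (∑ i, c i * a i) * (∑ j, c j * b j)
        - (∑ i, c i * b i) * (∑ j, c j * a j) + (∑ i, c i) * (∑ j, c j * (a j * b j)) := by
    rw [Finset.sum_mul_sum, Finset.sum_mul_sum, Finset.sum_mul_sum, Finset.sum_mul_sum,
      ← Finset.sum_sub_distrib, ← Finset.sum_sub_distrib, ← Finset.sum_add_distrib]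
    refine Finset.sum_congr rfl fun i _ => ?_
    rw [← Finset.sum_sub_distrib, ← Finset.sum_sub_distrib, ← Finset.sum_add_distrib]
    exact Finset.sum_congr rfl fun j _ => by ring
  simp only [hab]
  nlinarith [key, expand]

open Finset Matrix in

/-- Spectral representation of the quadratic form of the matrix exponential semigroup of a
real symmetric matrix. -/
lemma survival_rep {n : Type*} [Fintype n] [DecidableEq n] (B : Matrix n n ℝ)
    (hB : B.IsHermitian) (w : n → ℝ) :
    ∃ c lam : n → ℝ, (∀ j, 0 ≤ c j) ∧
      ∀ t : ℝ, (∑ x, ∑ ξ, w x * (NormedSpace.exp (t • B)) x ξ * w ξ) =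
        ∑ j, c j * Real.exp (t * lam j) := by
  set U : Matrix n n ℝ := (hB.eigenvectorUnitary : Matrix n n ℝ) with hU
  have hUs : U * star U = 1 := mem_unitaryGroup_iff.mp (hB.eigenvectorUnitary).2
  have hsU : star U * U = 1 := mem_unitaryGroup_iff'.mp (hB.eigenvectorUnitary).2
  have hinv : U⁻¹ = star U := Matrix.inv_eq_left_inv hsU
  have hUnit : IsUnit U := ⟨⟨U, star U, hUs, hsU⟩, rfl⟩
  refine ⟨fun j => (∑ x, w x * U x j) ^ 2, hB.eigenvalues, fun j => sq_nonneg _, fun t => ?_⟩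
  have hdiag : (Matrix.diagonal fun j => t * hB.eigenvalues j) =
      t • Matrix.diagonal (fun x => hB.eigenvalues x) := by
    ext i j
    by_cases h : i = j <;> simp [Matrix.diagonal_apply, h, Matrix.smul_apply]
  have h1 : t • B = U * Matrix.diagonal (fun j => t * hB.eigenvalues j) * U⁻¹ := by
    rw [hinv]
    conv_lhs => rw [hB.spectral_theorem, Unitary.conjStarAlgAut_apply]
    rw [RCLike.ofReal_real_eq_id]
    simp only [Function.comp_def, id_eq]
    rw [hdiag, mul_smul_comm, smul_mul_assoc]
  have h2 : NormedSpace.exp (t • B) =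
      U * Matrix.diagonal (fun j => Real.exp (t * hB.eigenvalues j)) * star U := by
    rw [h1, Matrix.exp_conj U _ hUnit, Matrix.exp_diagonal, hinv]
    congr 2
    funext j
    rw [Pi.exp_def]
    exact (Real.exp_eq_exp_ℝ ▸ rfl)
  have entry : ∀ x ξ, (NormedSpace.exp (t • B)) x ξ =
      ∑ j, U x j * Real.exp (t * hB.eigenvalues j) * U ξ j := by
    intro x ξ
    rw [h2, Matrix.mul_apply]
    refine Finset.sum_congr rfl fun j _ => ?_
    rw [Matrix.mul_diagonal, Matrix.star_apply, star_trivial]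
  calc ∑ x, ∑ ξ, w x * (NormedSpace.exp (t • B)) x ξ * w ξ
      = ∑ x, ∑ j, ∑ ξ, w x * (U x j * Real.exp (t * hB.eigenvalues j) * U ξ j) * w ξ := by
        refine Finset.sum_congr rfl fun x _ => ?_
        rw [Finset.sum_comm]
        refine Finset.sum_congr rfl fun ξ _ => ?_
        rw [entry, Finset.mul_sum, Finset.sum_mul]
    _ = ∑ j, ∑ x, ∑ ξ, w x * (U x j * Real.exp (t * hB.eigenvalues j) * U ξ j) * w ξ :=
        Finset.sum_comm
    _ = ∑ j, (∑ x, w x * U x j) ^ 2 * Real.exp (t * hB.eigenvalues j) := by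
        refine Finset.sum_congr rfl fun j _ => ?_
        rw [sq, Finset.sum_mul_sum, Finset.sum_mul]
        refine Finset.sum_congr rfl fun x _ => ?_
        rw [Finset.sum_mul]
        exact Finset.sum_congr rfl fun ξ _ => by ring

/-- Pointwise form of Theorem 1.1 in the continuous-time case: with
`S_c ν y t = ∑ x ≠ y, ∑ ξ ≠ y, ν x * (exp (t • (P̂ - 1))) x ξ` the survival
probability of the continuous-time chain, for the stationary start `π` one has
`S_c π y t * S_c π y s ≤ (1 - π y) * S_c π y (t + s)` for all `t, s ≥ 0`, and
consequently `∏ i, S_c π y (t i) ≤ (1 - π y)^(k-1) * S_c π y (∑ i, t i)` for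
every `k ≥ 2` and nonnegative lifespans. -/
theorem survival_ineq_continuous
    (V : Type*) [Fintype V] [DecidableEq V] (hV : 2 ≤ Fintype.card V)
    (P : Matrix V V ℝ) (hP0 : ∀ x z, 0 ≤ P x z) (hP1 : ∀ x, ∑ z, P x z = 1)
    (pi : V → ℝ) (hpi0 : ∀ x, 0 < pi x) (hpi1 : ∑ x, pi x = 1)
    (hrev : ∀ x z, pi x * P x z = pi z * P z x)
    (Sc : V → ℝ → ℝ)
    (hSc : ∀ (y : V) (t : ℝ), Sc y t =
      ∑ x : {x : V // x ≠ y}, ∑ ξ : {x : V // x ≠ y},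
        pi x.val *
          (NormedSpace.exp (t • ((P.submatrix Subtype.val Subtype.val)
              - (1 : Matrix {x : V // x ≠ y} {x : V // x ≠ y} ℝ)))
            : Matrix {x : V // x ≠ y} {x : V // x ≠ y} ℝ) x ξ) :
    (∀ (y : V) (t s : ℝ), 0 ≤ t → 0 ≤ s →
        Sc y t * Sc y s ≤ (1 - pi y) * Sc y (t + s)) ∧
      (∀ (k : ℕ), 2 ≤ k → ∀ (t : Fin k → ℝ), (∀ i, 0 ≤ t i) → ∀ (y : V),
        ∏ i, Sc y (t i) ≤ (1 - pi y) ^ (k - 1) * Sc y (∑ i, t i)) := by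
  have key : ∀ y : V, (∀ t, 0 ≤ Sc y t) ∧ 0 ≤ 1 - pi y ∧
      (∀ t s : ℝ, 0 ≤ t → 0 ≤ s → Sc y t * Sc y s ≤ (1 - pi y) * Sc y (t + s)) := by
    intro y
    set W := {x : V // x ≠ y} with hW
    set A : Matrix W W ℝ :=
      P.submatrix Subtype.val Subtype.val - (1 : Matrix W W ℝ) with hA
    set d : W → ℝ := fun x => Real.sqrt (pi x.val) with hd
    have hd0 : ∀ x : W, 0 < d x := fun x => Real.sqrt_pos.2 (hpi0 x.val)
    have hd2 : ∀ x : W, d x * d x = pi x.val := fun x => Real.mul_self_sqrt (hpi0 x.val).le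
    -- reversibility of A
    have hrevA : ∀ x ξ : W, pi x.val * A x ξ = pi ξ.val * A ξ x := by
      intro x ξ
      simp only [hA, Matrix.sub_apply, Matrix.submatrix_apply, Matrix.one_apply]
      by_cases h : x = ξ
      · subst h; ring
      · have h' : ξ ≠ x := fun hh => h hh.symm
        simp only [h, h', if_neg, if_false]
        rw [mul_sub, mul_sub, hrev x.val ξ.val, mul_zero, mul_zero]
    -- symmetrized matrix
    set B : Matrix W W ℝ := Matrix.of (fun x ξ => d x * A x ξ * (d ξ)⁻¹) with hB
    have hBapp : ∀ x ξ : W, B x ξ = d x * A x ξ * (d ξ)⁻¹ := fun x ξ => rfl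
    have hBH : B.IsHermitian := by
      show B.conjTranspose = B
      ext x ξ
      rw [Matrix.conjTranspose_apply, star_trivial, hBapp, hBapp]
      have h1 := hrevA ξ x
      rw [← hd2 ξ, ← hd2 x] at h1
      field_simp [(hd0 x).ne', (hd0 ξ).ne']
      linear_combination h1
    set D : Matrix W W ℝ := Matrix.diagonal d with hD
    set E : Matrix W W ℝ := Matrix.diagonal (fun x => (d x)⁻¹) with hE
    have hDE : D * E = 1 := by
      rw [hD, hE, Matrix.diagonal_mul_diagonal]
      ext i j
      by_cases h : i = j
      · subst h
        simp [Matrix.diagonal_apply_eq, mul_inv_cancel₀ (hd0 i).ne']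
      · simp [Matrix.diagonal_apply_ne _ h, Matrix.one_apply_ne h]
    have hED : E * D = 1 := by
      rw [hD, hE, Matrix.diagonal_mul_diagonal]
      ext i j
      by_cases h : i = j
      · subst h
        simp [Matrix.diagonal_apply_eq, inv_mul_cancel₀ (hd0 i).ne']
      · simp [Matrix.diagonal_apply_ne _ h, Matrix.one_apply_ne h]
    have hUnit : IsUnit D := ⟨⟨D, E, hDE, hED⟩, rfl⟩
    have hDinv : D⁻¹ = E := Matrix.inv_eq_right_inv hDE
    have hAconj : A = D⁻¹ * B * D := by
      rw [hDinv]
      ext x ξ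
      rw [hD, hE, Matrix.mul_diagonal, Matrix.diagonal_mul, hBapp]
      field_simp
      rw [eq_div_iff (mul_pos (hd0 x) (hd0 ξ)).ne']
      ring
    have hexp : ∀ t : ℝ, NormedSpace.exp (t • A) = D⁻¹ * NormedSpace.exp (t • B) * D := by
      intro t
      have : t • A = D⁻¹ * (t • B) * D := by
        rw [hAconj, mul_smul_comm, smul_mul_assoc]
      rw [this, Matrix.exp_conj' D _ hUnit]
    have hEntry : ∀ (t : ℝ) (x ξ : W),
        (NormedSpace.exp (t • A)) x ξ = (d x)⁻¹ * (NormedSpace.exp (t • B)) x ξ * d ξ := by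
      intro t x ξ
      rw [hexp t, hDinv, hD, hE, Matrix.mul_diagonal, Matrix.diagonal_mul]
    have hg : ∀ t : ℝ, Sc y t = ∑ x : W, ∑ ξ : W, d x * (NormedSpace.exp (t • B)) x ξ * d ξ := by
      intro t
      rw [hSc y t]
      refine Finset.sum_congr rfl fun x _ => Finset.sum_congr rfl fun ξ _ => ?_
      rw [hEntry t x ξ, ← hd2 x]
      have hx := (hd0 x).ne'
      field_simp
    obtain ⟨c, lam, hc, hrep⟩ := survival_rep B hBH d
    have hrep' : ∀ t : ℝ, Sc y t = ∑ j, c j * Real.exp (t * lam j) :=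
      fun t => (hg t).trans (hrep t)
    have hsumW : ∑ x : W, pi x.val = 1 - pi y := by
      have h1 : ∑ x : W, pi x.val = ∑ x ∈ Finset.univ.erase y, pi x := by
        rw [← Finset.sum_subtype (Finset.univ.erase y)
          (fun x => by simp [Finset.mem_erase]) pi]
      have h2 : ∑ x ∈ Finset.univ.erase y, pi x + pi y = ∑ x, pi x :=
        Finset.sum_erase_add _ _ (Finset.mem_univ y)
      rw [h1]; rw [hpi1] at h2; linarith
    have h0 : Sc y 0 = 1 - pi y := by
      rw [hg 0, zero_smul, NormedSpace.exp_zero]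
      rw [← hsumW]
      refine Finset.sum_congr rfl fun x _ => ?_
      rw [Finset.sum_eq_single x]
      · rw [Matrix.one_apply_eq, mul_one, hd2]
      · intro ξ _ hξ
        rw [Matrix.one_apply_ne (fun h => hξ h.symm), mul_zero, zero_mul]
      · intro h; exact absurd (Finset.mem_univ x) h
    have hcsum : 1 - pi y = ∑ j, c j := by
      rw [← h0, hrep' 0]
      refine Finset.sum_congr rfl fun j _ => ?_
      rw [zero_mul, Real.exp_zero, mul_one]
    refine ⟨fun t => ?_, ?_, fun t s ht hs => ?_⟩
    · rw [hrep' t]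
      exact Finset.sum_nonneg fun j _ => mul_nonneg (hc j) (Real.exp_pos _).le
    · rw [hcsum]; exact Finset.sum_nonneg fun j _ => hc j
    · rw [hrep' t, hrep' s, hrep' (t + s), hcsum]
      exact survival_cheb c lam hc t s ht hs
  constructor
  · exact fun y t s ht hs => (key y).2.2 t s ht hs
  · intro k hk t ht y
    obtain ⟨m, rfl⟩ : ∃ m, k = m + 1 := ⟨k - 1, by omega⟩
    have ind : ∀ (m : ℕ) (t : Fin (m + 1) → ℝ), (∀ i, 0 ≤ t i) →
        ∏ i, Sc y (t i) ≤ (1 - pi y) ^ m * Sc y (∑ i, t i) := by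
      intro m
      induction m with
      | zero =>
        intro t ht
        simp [Fin.prod_univ_one, Fin.sum_univ_one]
      | succ m ih =>
        intro t ht
        rw [Fin.prod_univ_castSucc, Fin.sum_univ_castSucc]
        calc (∏ i : Fin (m + 1), Sc y (t i.castSucc)) * Sc y (t (Fin.last (m + 1)))
            ≤ ((1 - pi y) ^ m * Sc y (∑ i : Fin (m + 1), t i.castSucc)) *
                Sc y (t (Fin.last (m + 1))) :=
              mul_le_mul_of_nonneg_right (ih _ (fun i => ht _)) ((key y).1 _)
          _ = (1 - pi y) ^ m * (Sc y (∑ i : Fin (m + 1), t i.castSucc) *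
                Sc y (t (Fin.last (m + 1)))) := by ring
          _ ≤ (1 - pi y) ^ m * ((1 - pi y) *
                Sc y (∑ i : Fin (m + 1), t i.castSucc + t (Fin.last (m + 1)))) :=
              mul_le_mul_of_nonneg_left
                ((key y).2.2 _ _ (Finset.sum_nonneg fun i _ => ht _) (ht _))
                (pow_nonneg (key y).2.1 m)
          _ = (1 - pi y) ^ (m + 1) *
                Sc y (∑ i : Fin (m + 1), t i.castSucc + t (Fin.last (m + 1))) := by ring
    simpa using ind m t ht
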